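/- Let G be a non-trivial group with a compression family 𝒞 for G, and let H = ⟨⋃𝒞⟩. Suppose that H is semi-transitive on 𝒞 by conjugation. Then: (1) D(H) acts transitively on every H-orbit on 𝒞, i.e. for every A ∈ 𝒞 and h ∈ H there is d ∈ D(H) with dAd⁻¹ = hAh⁻¹; and (2) D(H) is the smallest non-trivial subgroup K of G normalised by H with the property (*): there exists A ∈ 𝒞 such that for every g ∈ G there is k ∈ K for which [kAk⁻¹, gAg⁻¹] = {1}. That is, D(H) is non-trivial, is normalised by H, satisfies (*), and is contained in every non-trivial subgroup of G normalised by H that satisfies (*). -/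

import Mathlib

namespace Paper

variable {G : Type*} [Group G]

/-- Conjugate of a subgroup: `g A g⁻¹`. -/
def conjS (g : G) (A : Subgroup G) : Subgroup G := A.map (MulAut.conj g).toMonoidHom

/-- The family is invariant under conjugation in `G`. -/
def ConjInvariant (C : Set (Subgroup G)) : Prop := ∀ (g : G), ∀ A ∈ C, conjS g A ∈ C

/-- Condition (A): every member of the family is non-abelian. -/
def CondA (C : Set (Subgroup G)) : Prop :=
  ∀ A ∈ C, ∃ a ∈ A, ∃ b ∈ A, a * b ≠ b * a

/-- Condition (B): for every nontrivial element `g` of `H` there is a member `A` of the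
family with `[A, gAg⁻¹] = 1`. -/
def CondB (C : Set (Subgroup G)) (H : Subgroup G) : Prop :=
  ∀ g ∈ H, g ≠ 1 → ∃ A ∈ C, ⁅A, conjS g A⁆ = (⊥ : Subgroup G)

/-- Condition (C): `H` is semi-transitive on the family. -/
def CondC (C : Set (Subgroup G)) (H : Subgroup G) : Prop :=
  ∀ A ∈ C, ∀ B ∈ C, ∃ g ∈ H, conjS g A ≤ B

/-- Condition (D): the family is joinable. -/
def CondD (C : Set (Subgroup G)) : Prop :=
  ∀ A ∈ C, ∀ B ∈ C, ∀ C' ∈ C, ⁅A, C'⁆ = (⊥ : Subgroup G) → ¬ C' ≤ B →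
    ∃ D ∈ C, A ⊔ B ≤ D

/-- Condition (E): the family is shiftable over `H`: for each `A` in the family there is
`g ∈ H` and a homomorphism from the unrestricted direct product `∏_{i ≥ 1} A` into `H`
restricting to the identity on the first factor, which `g` conjugates by the shift. -/
def CondE (C : Set (Subgroup G)) (H : Subgroup G) : Prop :=
  ∀ A ∈ C, ∃ g ∈ H, ∃ φ : (ℕ → A) →* G,
    (∀ f : ℕ → A, φ f ∈ H) ∧
    (∀ a : A, φ (fun i => if i = 0 then a else 1) = (a : G)) ∧
    (∀ f : ℕ → A, g * φ f * g⁻¹ = φ (fun i => match i with | 0 => 1 | (n+1) => f n))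

/-- Conditions (A)–(C): a compression family for `H`. -/
def IsCompressionFamily (C : Set (Subgroup G)) (H : Subgroup G) : Prop :=
  ConjInvariant C ∧ CondA C ∧ CondB C H ∧ CondC C H

/-- Conditions (A)–(D): a joinable compression family for `H`. -/
def IsJoinableCompressionFamily (C : Set (Subgroup G)) (H : Subgroup G) : Prop :=
  IsCompressionFamily C H ∧ CondD C

/-- Conditions (A)–(E): a shift-joinable compression family for `H`. -/
def IsShiftJoinableCompressionFamily (C : Set (Subgroup G)) (H : Subgroup G) : Prop :=
  IsJoinableCompressionFamily C H ∧ CondE C H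

section Aux

variable {G : Type*} [Group G]

lemma mem_conjS {g x : G} {A : Subgroup G} : x ∈ conjS g A ↔ ∃ a ∈ A, g * a * g⁻¹ = x := by
  simp [conjS, Subgroup.mem_map]

lemma conjS_mem {g a : G} {A : Subgroup G} (ha : a ∈ A) : g * a * g⁻¹ ∈ conjS g A :=
  mem_conjS.2 ⟨a, ha, rfl⟩

lemma conjS_conjS (g h : G) (A : Subgroup G) : conjS g (conjS h A) = conjS (g * h) A := by
  ext x
  simp only [mem_conjS]
  constructor
  · rintro ⟨y, ⟨a, ha, rfl⟩, rfl⟩; exact ⟨a, ha, by group⟩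
  · rintro ⟨a, ha, rfl⟩; exact ⟨h * a * h⁻¹, ⟨a, ha, rfl⟩, by group⟩

lemma conjS_one (A : Subgroup G) : conjS 1 A = A := by
  ext x; simp [mem_conjS]

lemma conjS_mono {A B : Subgroup G} (g : G) (h : A ≤ B) : conjS g A ≤ conjS g B :=
  Subgroup.map_mono h

lemma conjS_self {a : G} {A : Subgroup G} (ha : a ∈ A) : conjS a A = A := by
  ext x
  simp only [mem_conjS]
  constructor
  · rintro ⟨b, hb, rfl⟩; exact A.mul_mem (A.mul_mem ha hb) (A.inv_mem ha)
  · intro hx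
    exact ⟨a⁻¹ * x * a, A.mul_mem (A.mul_mem (A.inv_mem ha) hx) ha, by group⟩

lemma conjS_commutator (g : G) (A B : Subgroup G) :
    conjS g ⁅A, B⁆ = ⁅conjS g A, conjS g B⁆ :=
  Subgroup.map_commutator A B _

lemma conjS_bot (g : G) : conjS g (⊥ : Subgroup G) = ⊥ := by
  simp [conjS]

end Aux

open scoped commutatorElement

/-- Proposition: let 𝒞 be a compression family for `G`, `H = ⟨⋃𝒞⟩`, and suppose `H` is
semi-transitive on 𝒞. Then (1) `D(H)` acts transitively on every `H`-orbit on 𝒞, and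
(2) `D(H)` is the smallest non-trivial `H`-invariant subgroup `K` of `G` satisfying
property (*): there is `A ∈ 𝒞` such that for all `g ∈ G` there is `k ∈ K` with
`[kAk⁻¹, gAg⁻¹] = 1`. -/
theorem derived_transitive_and_minimal [Nontrivial G] (C : Set (Subgroup G))
    (hC : IsCompressionFamily C (⊤ : Subgroup G))
    (H : Subgroup G) (hH : H = sSup C) (hsemi : CondC C H) :
    (∀ A ∈ C, ∀ h ∈ H, ∃ d ∈ (⁅H, H⁆ : Subgroup G), conjS d A = conjS h A) ∧
      (⁅H, H⁆ : Subgroup G) ≠ ⊥ ∧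
      (∀ h ∈ H, conjS h (⁅H, H⁆ : Subgroup G) = ⁅H, H⁆) ∧
      (∃ A ∈ C, ∀ g : G, ∃ k ∈ (⁅H, H⁆ : Subgroup G),
        ⁅conjS k A, conjS g A⁆ = (⊥ : Subgroup G)) ∧
      (∀ K : Subgroup G, K ≠ ⊥ → (∀ h ∈ H, conjS h K = K) →
        (∃ A ∈ C, ∀ g : G, ∃ k ∈ K, ⁅conjS k A, conjS g A⁆ = (⊥ : Subgroup G)) →
        (⁅H, H⁆ : Subgroup G) ≤ K) := by
  obtain ⟨hinv, hA, hB, _hCtop⟩ := hC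
  have hmemH : ∀ A ∈ C, A ≤ H := fun A hAC => hH ▸ le_sSup hAC
  -- H is normal in G (conjugation-invariance of C)
  have hconj_le : ∀ g : G, conjS g H ≤ H := by
    intro g
    rw [hH]
    refine Subgroup.map_le_iff_le_comap.2 (sSup_le fun A hAC => ?_)
    intro a ha
    simp only [Subgroup.mem_comap, MulEquiv.coe_toMonoidHom, MulAut.conj_apply]
    exact le_sSup (hinv g A hAC) (conjS_mem ha)
  have hHnorm : ∀ g : G, conjS g H = H := by
    intro g
    refine le_antisymm (hconj_le g) ?_
    have : conjS g (conjS g⁻¹ H) ≤ conjS g H := conjS_mono g (hconj_le g⁻¹)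
    rwa [conjS_conjS, mul_inv_cancel, conjS_one] at this
  have hDnorm : ∀ g : G, conjS g (⁅H, H⁆ : Subgroup G) = ⁅H, H⁆ := by
    intro g
    rw [conjS_commutator, hHnorm g]
  have hDmemconj : ∀ h : G, ∀ d ∈ (⁅H, H⁆ : Subgroup G), h * d * h⁻¹ ∈ (⁅H, H⁆ : Subgroup G) :=
    fun h d hd => (hDnorm h) ▸ conjS_mem hd
  -- decomposition H = D(H) * A
  have hdecomp : ∀ A ∈ C, ∀ h ∈ H, ∃ d ∈ (⁅H, H⁆ : Subgroup G), ∃ a ∈ A, h = d * a := by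
    intro A hAC
    let S : Subgroup G :=
      { carrier := {x | ∃ d ∈ (⁅H, H⁆ : Subgroup G), ∃ a ∈ A, x = d * a}
        one_mem' := ⟨1, one_mem _, 1, one_mem _, by group⟩
        mul_mem' := by
          rintro x y ⟨d, hd, a, ha, rfl⟩ ⟨e, he, b, hb, rfl⟩
          exact ⟨d * (a * e * a⁻¹),
            mul_mem hd (hDmemconj a e he), a * b, A.mul_mem ha hb, by group⟩
        inv_mem' := by
          rintro x ⟨d, hd, a, ha, rfl⟩
          exact ⟨a⁻¹ * d⁻¹ * (a⁻¹)⁻¹,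
            hDmemconj a⁻¹ d⁻¹ (inv_mem hd), a⁻¹, A.inv_mem ha, by group⟩ }
    have hHS : H ≤ S := by
      rw [hH]
      refine sSup_le fun B hBC b hb => ?_
      obtain ⟨g, hgH, hgBA⟩ := hsemi B hBC A hAC
      exact ⟨⁅b, g⁆, Subgroup.commutator_mem_commutator (hmemH B hBC hb) hgH,
        g * b * g⁻¹, hgBA (conjS_mem hb), by rw [commutatorElement_def]; group⟩
    intro h hh
    exact hHS hh
  have part1 : ∀ A ∈ C, ∀ h ∈ H, ∃ d ∈ (⁅H, H⁆ : Subgroup G), conjS d A = conjS h A := by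
    intro A hAC h hh
    obtain ⟨d, hd, a, ha, rfl⟩ := hdecomp A hAC h hh
    exact ⟨d, hd, by rw [← conjS_conjS d a A, conjS_self ha]⟩
  -- a member of C
  obtain ⟨s, hs⟩ := exists_ne (1 : G)
  obtain ⟨A₀, hA₀C, hA₀comm⟩ := hB s (Subgroup.mem_top s) hs
  -- nontriviality of the derived subgroup
  have hDne : (⁅H, H⁆ : Subgroup G) ≠ ⊥ := by
    intro hbot
    obtain ⟨a, ha, b, hb, hab⟩ := hA A₀ hA₀C
    have hmem : ⁅a, b⁆ ∈ (⁅H, H⁆ : Subgroup G) :=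
      Subgroup.commutator_mem_commutator (hmemH A₀ hA₀C ha) (hmemH A₀ hA₀C hb)
    rw [hbot, Subgroup.mem_bot] at hmem
    exact hab (commutatorElement_eq_one_iff_mul_comm.1 hmem)
  -- for every conjugate of a member, some member commutes with it
  have star_aux : ∀ A ∈ C, ∀ g : G, ∃ E ∈ C, ⁅E, conjS g A⁆ = (⊥ : Subgroup G) := by
    intro A hAC g
    obtain ⟨t, htH, ht⟩ := hsemi (conjS g A) (hinv g A hAC) (conjS s A₀) (hinv s A₀ hA₀C)
    refine ⟨conjS t⁻¹ A₀, hinv t⁻¹ A₀ hA₀C, ?_⟩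
    have h1 : ⁅A₀, conjS t (conjS g A)⁆ = (⊥ : Subgroup G) :=
      le_bot_iff.1 (le_trans (Subgroup.commutator_mono le_rfl ht) (le_of_eq hA₀comm))
    have h2 := congrArg (conjS t⁻¹) h1
    rwa [conjS_commutator, conjS_conjS t⁻¹ t (conjS g A), inv_mul_cancel, conjS_one,
      conjS_bot] at h2
  have star_D : ∃ A ∈ C, ∀ g : G, ∃ k ∈ (⁅H, H⁆ : Subgroup G),
      ⁅conjS k A, conjS g A⁆ = (⊥ : Subgroup G) := by
    refine ⟨A₀, hA₀C, fun g => ?_⟩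
    obtain ⟨E, hEC, hE⟩ := star_aux A₀ hA₀C g
    obtain ⟨u, huH, hu⟩ := hsemi A₀ hA₀C E hEC
    obtain ⟨k, hk, hkA⟩ := part1 A₀ hA₀C u huH
    exact ⟨k, hk, le_bot_iff.1 (le_trans
      (Subgroup.commutator_mono (le_of_eq_of_le hkA hu) le_rfl) (le_of_eq hE))⟩
  -- minimality
  have hmin : ∀ K : Subgroup G, K ≠ ⊥ → (∀ h ∈ H, conjS h K = K) →
      (∃ A ∈ C, ∀ g : G, ∃ k ∈ K, ⁅conjS k A, conjS g A⁆ = (⊥ : Subgroup G)) →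
      (⁅H, H⁆ : Subgroup G) ≤ K := by
    rintro K _hKne hKinv ⟨A, hAC, hstar⟩
    have hKconj : ∀ h ∈ H, ∀ k ∈ K, h * k * h⁻¹ ∈ K :=
      fun h hh k hk => (hKinv h hh) ▸ conjS_mem hk
    -- property (*) transfers to H-conjugates of A
    have hstar' : ∀ h ∈ H, ∀ g : G, ∃ k ∈ K,
        ⁅conjS (k * h) A, conjS (g * h) A⁆ = (⊥ : Subgroup G) := by
      intro h hh g
      obtain ⟨k', hk', hcomm⟩ := hstar (h⁻¹ * g * h)
      refine ⟨h * k' * h⁻¹, hKconj h hh k' hk', ?_⟩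
      have h2 := congrArg (conjS h) hcomm
      rw [conjS_commutator, conjS_conjS h k' A, conjS_conjS h (h⁻¹ * g * h) A,
        conjS_bot] at h2
      have e1 : h * k' * h⁻¹ * h = h * k' := by group
      have e2 : h * (h⁻¹ * g * h) = g * h := by group
      rw [e2] at h2
      rw [e1]
      exact h2
    -- commutators of generators lie in K
    have hgen : ∀ B ∈ C, ∀ b ∈ B, ∀ B' ∈ C, ∀ b' ∈ B', ⁅b, b'⁆ ∈ K := by
      intro B hBC b hb B' hB'C b' hb'
      obtain ⟨v, hvH, hv⟩ := hsemi B hBC A hAC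
      have hBle : B ≤ conjS v⁻¹ A := by
        intro x hx
        exact mem_conjS.2 ⟨v * x * v⁻¹, hv (conjS_mem hx), by group⟩
      obtain ⟨w, hwH, hw⟩ := hsemi B' hB'C (conjS v⁻¹ A) (hinv v⁻¹ A hAC)
      have hB'le : B' ≤ conjS (w⁻¹ * v⁻¹) A := by
        intro x hx
        have h3 : w * x * w⁻¹ ∈ conjS v⁻¹ A := hw (conjS_mem hx)
        have h4 : w⁻¹ * (w * x * w⁻¹) * (w⁻¹)⁻¹ ∈ conjS w⁻¹ (conjS v⁻¹ A) := conjS_mem h3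
        rw [conjS_conjS] at h4
        have e : w⁻¹ * (w * x * w⁻¹) * (w⁻¹)⁻¹ = x := by group
        rwa [e] at h4
      obtain ⟨k, hkK, hcomm⟩ := hstar' v⁻¹ (H.inv_mem hvH) w⁻¹
      have hx' : k * b * k⁻¹ ∈ conjS (k * v⁻¹) A := by
        rw [← conjS_conjS k v⁻¹ A]
        exact conjS_mem (hBle hb)
      have hy' : b' ∈ conjS (w⁻¹ * v⁻¹) A := hB'le hb'
      have h0 : ⁅k * b * k⁻¹, b'⁆ = 1 := by
        have := Subgroup.commutator_mem_commutator hx' hy'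
        rw [hcomm] at this
        exact Subgroup.mem_bot.1 this
      have hc : k * b * k⁻¹ * b' = b' * (k * b * k⁻¹) := by
        have := commutatorElement_eq_one_iff_mul_comm.1 h0
        group at this ⊢
        exact this
      have huK : b * k * b⁻¹ * k⁻¹ ∈ K :=
        K.mul_mem (hKconj b (hmemH B hBC hb) k hkK) (K.inv_mem hkK)
      have key : ⁅b, b'⁆ = (b * k * b⁻¹ * k⁻¹) * (b' * (b * k * b⁻¹ * k⁻¹)⁻¹ * b'⁻¹) := by
        have h1 : (b * k * b⁻¹ * k⁻¹) * (b' * (b * k * b⁻¹ * k⁻¹)⁻¹ * b'⁻¹)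
            = (b * k * b⁻¹ * k⁻¹) * ((b' * (k * b * k⁻¹)) * (b⁻¹ * b'⁻¹)) := by group
        rw [commutatorElement_def, h1, ← hc]
        group
      rw [key]
      exact K.mul_mem huK (hKconj b' (hmemH B' hB'C hb') _ (K.inv_mem huK))
    -- first pass: arbitrary x in H against generators
    have pass1 : ∀ x ∈ H, ∀ B' ∈ C, ∀ y ∈ B', ⁅x, y⁆ ∈ K := by
      let T : Subgroup G :=
        { carrier := {x | x ∈ H ∧ ∀ B' ∈ C, ∀ y ∈ B', ⁅x, y⁆ ∈ K}
          one_mem' := ⟨H.one_mem, fun B' _ y _ => by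
            have e : ⁅(1 : G), y⁆ = 1 := by rw [commutatorElement_def]; group
            rw [e]; exact K.one_mem⟩
          mul_mem' := by
            rintro x₁ x₂ ⟨h1, p1⟩ ⟨h2, p2⟩
            refine ⟨H.mul_mem h1 h2, fun B' hB' y hy => ?_⟩
            have e : ⁅x₁ * x₂, y⁆ = (x₁ * ⁅x₂, y⁆ * x₁⁻¹) * ⁅x₁, y⁆ := by
              rw [commutatorElement_def, commutatorElement_def, commutatorElement_def]; group
            rw [e]
            exact K.mul_mem (hKconj x₁ h1 _ (p2 B' hB' y hy)) (p1 B' hB' y hy)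
          inv_mem' := by
            rintro x ⟨h1, p1⟩
            refine ⟨H.inv_mem h1, fun B' hB' y hy => ?_⟩
            have e : ⁅x⁻¹, y⁆ = x⁻¹ * ⁅x, y⁆⁻¹ * (x⁻¹)⁻¹ := by
              rw [commutatorElement_def, commutatorElement_def]; group
            rw [e]
            exact hKconj x⁻¹ (H.inv_mem h1) _ (K.inv_mem (p1 B' hB' y hy)) }
      have hle : H ≤ T := by
        rw [hH]
        exact sSup_le fun B hBC x hx =>
          ⟨hmemH B hBC hx, fun B' hB' y hy => hgen B hBC x hx B' hB' y hy⟩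
      exact fun x hx => (hle hx).2
    -- second pass: arbitrary pairs in H
    have pass2 : ∀ y ∈ H, ∀ x ∈ H, ⁅x, y⁆ ∈ K := by
      let T : Subgroup G :=
        { carrier := {y | y ∈ H ∧ ∀ x ∈ H, ⁅x, y⁆ ∈ K}
          one_mem' := ⟨H.one_mem, fun x _ => by
            have e : ⁅x, (1 : G)⁆ = 1 := by rw [commutatorElement_def]; group
            rw [e]; exact K.one_mem⟩
          mul_mem' := by
            rintro y₁ y₂ ⟨h1, p1⟩ ⟨h2, p2⟩
            refine ⟨H.mul_mem h1 h2, fun x hx => ?_⟩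
            have e : ⁅x, y₁ * y₂⁆ = ⁅x, y₁⁆ * (y₁ * ⁅x, y₂⁆ * y₁⁻¹) := by
              rw [commutatorElement_def, commutatorElement_def, commutatorElement_def]; group
            rw [e]
            exact K.mul_mem (p1 x hx) (hKconj y₁ h1 _ (p2 x hx))
          inv_mem' := by
            rintro y ⟨h1, p1⟩
            refine ⟨H.inv_mem h1, fun x hx => ?_⟩
            have e : ⁅x, y⁻¹⁆ = y⁻¹ * ⁅x, y⁆⁻¹ * (y⁻¹)⁻¹ := by
              rw [commutatorElement_def, commutatorElement_def]; group
            rw [e]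
            exact hKconj y⁻¹ (H.inv_mem h1) _ (K.inv_mem (p1 x hx)) }
      have hle : H ≤ T := by
        rw [hH]
        exact sSup_le fun B hBC y hy =>
          ⟨hmemH B hBC hy, fun x hx => pass1 x hx B hBC y hy⟩
      exact fun y hy => (hle hy).2
    exact Subgroup.commutator_le.2 fun x hx y hy => pass2 y hy x hx
  exact ⟨part1, hDne, fun h _ => hDnorm h, star_D, hmin⟩

end Paper
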